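/- Multiplicity of asymmetric-information equilibrium strategies: suppose T₁ ≠ T₂ both lie in (0, min (θ̲₁ · T_max) (θ̲₂ · T_max)] and both satisfy the minimal-type constrained-equilibrium condition (σ₁^{Tₖ}(θ̲₁) ≤ m_A(σ₂^{Tₖ}(θ̲₂)) and σ₂^{Tₖ}(θ̲₂) ≥ s_A(σ₁^{Tₖ}(θ̲₁)) for k = 1, 2). Then both the T₁-targeting and the T₂-targeting strategy profiles are ex-post equilibria, and they are distinct: for every θ₁ ∈ [θ̲₁, θ̄₁], σ₁^{T₁}(θ₁) ≠ σ₁^{T₂}(θ₁), and for every θ₂ ∈ [θ̲₂, θ̄₂], σ₂^{T₁}(θ₂) ≠ σ₂^{T₂}(θ₂). -/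

import Mathlib

open Set

/-- Type-dependent interdealer trade quantity. -/
noncomputable def interQt (D S : ℝ → ℝ) (θ1 θ2 x y : ℝ) : ℝ :=
  min (θ1 * D x) (θ2 * S y)

/-- Type-dependent payoff of `BD_mm`. -/
noncomputable def piMMt (D S : ℝ → ℝ) (θ1 θ2 x y : ℝ) : ℝ :=
  (1 / 2) * max (y - x) 0 * interQt D S θ1 θ2 x y -
    max (θ1 * D x - interQt D S θ1 θ2 x y) 0 * x

/-- Type-dependent payoff of `BD_rm`. -/
noncomputable def piRMt (D S : ℝ → ℝ) (θ1 θ2 x y : ℝ) : ℝ :=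
  (1 / 2) * max (y - x) 0 * interQt D S θ1 θ2 x y -
    max (θ2 * S y - interQt D S θ1 θ2 x y) 0 * y

/-- Ex-post equilibrium of the `T`-targeting profile `(σ1, σ2)`. -/
def IsExPostEquilibrium (D S : ℝ → ℝ) (rb θl1 θu1 θl2 θu2 : ℝ)
    (σ1 σ2 : ℝ → ℝ) : Prop :=
  ∀ θ1 ∈ Set.Icc θl1 θu1, ∀ θ2 ∈ Set.Icc θl2 θu2,
    (∀ x ∈ Set.Icc (0:ℝ) (σ2 θ2),
      piMMt D S θ1 θ2 x (σ2 θ2) ≤ piMMt D S θ1 θ2 (σ1 θ1) (σ2 θ2)) ∧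
    (∀ y ∈ Set.Icc (σ1 θ1) rb,
      piRMt D S θ1 θ2 (σ1 θ1) y ≤ piRMt D S θ1 θ2 (σ1 θ1) (σ2 θ2))

lemma aux_strictConcave (f : ℝ → ℝ) (U : Set ℝ) (hUo : IsOpen U)
    (hf : ContDiffOn ℝ 2 f U) (α β p q : ℝ) (hpq : Icc p q ⊆ U)
    (h2 : ∀ r ∈ Ioo p q, 2 * β * deriv f r + (α + β * r) * deriv (deriv f) r < 0) :
    StrictConcaveOn ℝ (Icc p q) (fun r => (α + β * r) * f r) := by
  have hfd : ∀ x ∈ U, DifferentiableAt ℝ f x := fun x hx =>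
    (hf.differentiableOn (by norm_num)).differentiableAt (hUo.mem_nhds hx)
  have hfC1 : ContDiffOn ℝ 1 (deriv f) U := by
    have h21 : (2 : WithTop ℕ∞) = 1 + 1 := by norm_num
    rw [h21] at hf
    exact ((contDiffOn_succ_iff_deriv_of_isOpen hUo).mp hf).2.2
  have hfd' : ∀ x ∈ U, DifferentiableAt ℝ (deriv f) x := fun x hx =>
    (hfC1.differentiableOn (by norm_num)).differentiableAt (hUo.mem_nhds hx)
  have hlin : ∀ x : ℝ, HasDerivAt (fun r => α + β * r) β x := by
    intro x
    simpa using ((hasDerivAt_id x).const_mul β).const_add α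
  have key : ∀ x ∈ U, HasDerivAt (fun r => (α + β * r) * f r)
      (β * f x + (α + β * x) * deriv f x) x := fun x hx =>
    (hlin x).mul (hfd x hx).hasDerivAt
  apply strictConcaveOn_of_deriv2_neg (convex_Icc p q)
  · exact ((continuous_const.add (continuous_const.mul continuous_id)).continuousOn).mul
      (hf.continuousOn.mono hpq)
  · intro x hx
    rw [interior_Icc] at hx
    have hxU : x ∈ U := hpq ⟨hx.1.le, hx.2.le⟩
    have hev : deriv (fun r => (α + β * r) * f r) =ᶠ[nhds x]
        (fun r => β * f r + (α + β * r) * deriv f r) := by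
      filter_upwards [hUo.mem_nhds hxU] with y hy
      exact (key y hy).deriv
    have hφ : HasDerivAt (fun r => β * f r + (α + β * r) * deriv f r)
        (β * deriv f x + (β * deriv f x + (α + β * x) * deriv (deriv f) x)) x :=
      ((hfd x hxU).hasDerivAt.const_mul β).add ((hlin x).mul (hfd' x hxU).hasDerivAt)
    have : deriv^[2] (fun r => (α + β * r) * f r) x
        = β * deriv f x + (β * deriv f x + (α + β * x) * deriv (deriv f) x) := by
      simp only [Function.iterate_succ, Function.iterate_zero, Function.comp_apply, id_eq]
      rw [hev.deriv_eq]
      exact hφ.deriv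
    rw [this]
    have := h2 x hx
    linarith

lemma concave_le {s : Set ℝ} {g : ℝ → ℝ} (hg : ConcaveOn ℝ s g) {a b m : ℝ}
    (ha : a ∈ s) (hm : m ∈ s) (hab : a ≤ b) (hbm : b ≤ m) (hmax : g a ≤ g m) : g a ≤ g b := by
  have hseg : b ∈ segment ℝ a m := by
    rw [segment_eq_Icc (hab.trans hbm)]; exact ⟨hab, hbm⟩
  have := hg.ge_on_segment ha hm hseg
  rwa [min_eq_left hmax] at this

lemma concave_le' {s : Set ℝ} {g : ℝ → ℝ} (hg : ConcaveOn ℝ s g) {a b m : ℝ}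
    (ha : a ∈ s) (hm : m ∈ s) (hmb : m ≤ b) (hba : b ≤ a) (hmax : g a ≤ g m) : g a ≤ g b := by
  have hseg : b ∈ segment ℝ m a := by
    rw [segment_eq_Icc (hmb.trans hba)]; exact ⟨hmb, hba⟩
  have := hg.ge_on_segment hm ha hseg
  rwa [min_eq_right hmax] at this

set_option maxHeartbeats 1000000 in
lemma equilibrium_one
    (rhat rb : ℝ) (D S mA sA : ℝ → ℝ)
    (hrhat : 0 < rhat) (hrb : rhat < rb)
    (hDm : StrictMonoOn D (Icc 0 rb)) (hSa : StrictAntiOn S (Icc 0 rb))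
    (U : Set ℝ) (hUo : IsOpen U) (hU : Icc (0:ℝ) rb ⊆ U)
    (hD2 : ContDiffOn ℝ 2 D U) (hS2 : ContDiffOn ℝ 2 S U)
    (hD' : ∀ x ∈ Icc (0:ℝ) rb, 0 < deriv D x)
    (hD'' : ∀ x ∈ Icc (0:ℝ) rb, deriv (deriv D) x < 0)
    (hS' : ∀ x ∈ Icc (0:ℝ) rb, deriv S x < 0)
    (hS'' : ∀ x ∈ Icc (0:ℝ) rb, deriv (deriv S) x < 0)
    (θl1 θu1 θl2 θu2 : ℝ)
    (hθ1 : 0 < θl1) (hθ1' : θl1 ≤ θu1) (hθ2 : 0 < θl2) (hθ2' : θl2 ≤ θu2)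
    (hmA : ∀ y ∈ Ioc (0:ℝ) rb, mA y ∈ Icc (0:ℝ) y ∧
      (∀ r ∈ Icc (0:ℝ) y, (y - r) * D r ≤ (y - mA y) * D (mA y)) ∧
      (∀ m ∈ Icc (0:ℝ) y,
        (∀ r ∈ Icc (0:ℝ) y, (y - r) * D r ≤ (y - m) * D m) → m = mA y))
    (hsA : ∀ x ∈ Ico (0:ℝ) rb, sA x ∈ Icc x rb ∧
      (∀ r ∈ Icc x rb, (r - x) * S r ≤ (sA x - x) * S (sA x)) ∧
      (∀ m ∈ Icc x rb,
        (∀ r ∈ Icc x rb, (r - x) * S r ≤ (m - x) * S m) → m = sA x))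
    (T : ℝ) (hT : 0 < T)
    (σ1 σ2 : ℝ → ℝ)
    (hσ1 : ∀ θ1 ∈ Icc θl1 θu1, σ1 θ1 ∈ Icc (0:ℝ) rhat ∧ θ1 * D (σ1 θ1) = T)
    (hσ2 : ∀ θ2 ∈ Icc θl2 θu2, σ2 θ2 ∈ Icc rhat rb ∧ θ2 * S (σ2 θ2) = T)
    (hmin1 : σ1 θl1 ≤ mA (σ2 θl2)) (hmin2 : sA (σ1 θl1) ≤ σ2 θl2) :
    IsExPostEquilibrium D S rb θl1 θu1 θl2 θu2 σ1 σ2 := by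
  intro θ1 hθ1m θ2 hθ2m
  obtain ⟨hx0I, hx0T⟩ := hσ1 θ1 hθ1m
  obtain ⟨hy0I, hy0T⟩ := hσ2 θ2 hθ2m
  obtain ⟨hxlI, hxlT⟩ := hσ1 θl1 ⟨le_refl _, hθ1'⟩
  obtain ⟨hylI, hylT⟩ := hσ2 θl2 ⟨le_refl _, hθ2'⟩
  set x0 := σ1 θ1 with hx0def
  set y0 := σ2 θ2 with hy0def
  set xl := σ1 θl1 with hxldef
  set yl := σ2 θl2 with hyldef
  have hθ1p : 0 < θ1 := lt_of_lt_of_le hθ1 hθ1m.1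
  have hθ2p : 0 < θ2 := lt_of_lt_of_le hθ2 hθ2m.1
  have hx0rb : x0 ∈ Icc (0:ℝ) rb := ⟨hx0I.1, hx0I.2.trans hrb.le⟩
  have hy0rb : y0 ∈ Icc (0:ℝ) rb := ⟨hrhat.le.trans hy0I.1, hy0I.2⟩
  have hxlrb : xl ∈ Icc (0:ℝ) rb := ⟨hxlI.1, hxlI.2.trans hrb.le⟩
  have hylrb : yl ∈ Icc (0:ℝ) rb := ⟨hrhat.le.trans hylI.1, hylI.2⟩
  have hDx0 : 0 < D x0 := by nlinarith [mul_pos hθ1p hT]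
  have hSy0 : 0 < S y0 := by nlinarith [mul_pos hθ2p hT]
  have hx0y0 : x0 ≤ y0 := hx0I.2.trans hy0I.1
  -- x0 ≤ xl
  have hx0xl : x0 ≤ xl := by
    by_contra h
    push_neg at h
    have := hDm hxlrb hx0rb h
    nlinarith [hθ1m.1]
  -- yl ≤ y0
  have hyly0 : yl ≤ y0 := by
    by_contra h
    push_neg at h
    have := hSa hy0rb hylrb h
    nlinarith [hθ2m.1]
  -- mA facts at yl
  obtain ⟨hmI, hmMax, _⟩ := hmA yl ⟨hrhat.trans_le hylI.1, hylrb.2⟩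
  obtain ⟨hsI, hsMax, _⟩ := hsA xl ⟨hxlrb.1, hxlI.2.trans_lt hrb⟩
  -- concavity of r ↦ (yl - r) * D r on Icc 0 yl
  have hconcD : StrictConcaveOn ℝ (Icc 0 yl) (fun r => (yl + (-1) * r) * D r) := by
    apply aux_strictConcave D U hUo hD2 yl (-1) 0 yl
      (fun r hr => hU ⟨hr.1, hr.2.trans hylrb.2⟩)
    intro r hr
    have hrrb : r ∈ Icc (0:ℝ) rb := ⟨hr.1.le, hr.2.le.trans hylrb.2⟩
    have := hD' r hrrb
    have := hD'' r hrrb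
    nlinarith [hr.2]
  have hconcS : StrictConcaveOn ℝ (Icc xl rb) (fun r => (-xl + 1 * r) * S r) := by
    apply aux_strictConcave S U hUo hS2 (-xl) 1 xl rb
      (fun r hr => hU ⟨hxlrb.1.trans hr.1, hr.2⟩)
    intro r hr
    have hrrb : r ∈ Icc (0:ℝ) rb := ⟨hxlrb.1.trans hr.1.le, hr.2.le⟩
    have := hS' r hrrb
    have := hS'' r hrrb
    nlinarith [hr.1]
  have eD : ∀ a : ℝ, (yl + (-1) * a) * D a = (yl - a) * D a := fun a => by ring
  have eS : ∀ a : ℝ, (-xl + 1 * a) * S a = (a - xl) * S a := fun a => by ring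
  -- Claim A
  have claimA : ∀ x, 0 ≤ x → x ≤ x0 → (y0 - x) * D x ≤ (y0 - x0) * D x0 := by
    intro x hx hxx0
    have hx0yl : x0 ≤ yl := hx0I.2.trans hylI.1
    have hmem : x ∈ Icc 0 yl := ⟨hx, hxx0.trans hx0yl⟩
    have hmax : (yl + (-1) * x) * D x ≤ (yl + (-1) * mA yl) * D (mA yl) := by
      rw [eD, eD]; exact hmMax x hmem
    have hstep : (yl + (-1) * x) * D x ≤ (yl + (-1) * x0) * D x0 :=
      concave_le hconcD.concaveOn hmem hmI hxx0 (hx0xl.trans hmin1) hmax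
    rw [eD, eD] at hstep
    have hDxx0 : D x ≤ D x0 := by
      rcases eq_or_lt_of_le hxx0 with h | h
      · rw [h]
      · exact (hDm ⟨hx, hxx0.trans hx0rb.2⟩ hx0rb h).le
    nlinarith
  -- Claim B
  have claimB : ∀ y, y0 ≤ y → y ≤ rb → (y - x0) * S y ≤ (y0 - x0) * S y0 := by
    intro y hy0y hyrb
    have hxly0 : xl ≤ y0 := hxlI.2.trans hy0I.1
    have hymem : y ∈ Icc xl rb := ⟨hxly0.trans hy0y, hyrb⟩
    have hy0mem : y0 ∈ Icc xl rb := ⟨hxly0, hy0rb.2⟩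
    have hmax : (-xl + 1 * y) * S y ≤ (-xl + 1 * sA xl) * S (sA xl) := by
      rw [eS, eS]; exact hsMax y hymem
    have hstep : (-xl + 1 * y) * S y ≤ (-xl + 1 * y0) * S y0 :=
      concave_le' hconcS.concaveOn hymem hsI (hmin2.trans hyly0) hy0y hmax
    rw [eS, eS] at hstep
    have hSyy0 : S y ≤ S y0 := by
      rcases eq_or_lt_of_le hy0y with h | h
      · rw [← h]
      · exact (hSa hy0rb ⟨hy0rb.1.trans hy0y, hyrb⟩ h).le
    nlinarith
  constructor
  · intro x hx
    simp only [piMMt, interQt]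
    rw [hy0T, hx0T, min_self]
    have hR0 : max (T - T) 0 = 0 := by simp
    rw [hR0]
    have hRmax : max (y0 - x0) 0 = y0 - x0 := max_eq_left (by linarith)
    rw [hRmax]
    rcases le_or_gt (θ1 * D x) T with hcase | hcase
    · rw [min_eq_left hcase]
      have h0 : max (θ1 * D x - θ1 * D x) 0 = 0 := by simp
      rw [h0]
      have hxx0 : x ≤ x0 := by
        by_contra h
        push_neg at h
        have := hDm hx0rb ⟨hx.1, hx.2.trans hy0rb.2⟩ h
        nlinarith
      have hLmax : max (y0 - x) 0 = y0 - x := max_eq_left (by linarith [hx.2])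
      rw [hLmax]
      have key := mul_le_mul_of_nonneg_left (claimA x hx.1 hxx0) hθ1p.le
      nlinarith
    · rw [min_eq_right hcase.le]
      have h1 : max (θ1 * D x - T) 0 = θ1 * D x - T := max_eq_left (by linarith)
      rw [h1]
      have hx0x : x0 ≤ x := by
        by_contra h
        push_neg at h
        have := hDm ⟨hx.1, hx.2.trans hy0rb.2⟩ hx0rb h
        nlinarith
      have hLmax : max (y0 - x) 0 = y0 - x := max_eq_left (by linarith [hx.2])
      rw [hLmax]
      nlinarith [mul_nonneg (by linarith : (0:ℝ) ≤ θ1 * D x - T) hx.1]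
  · intro y hy
    have hyrb : y ∈ Icc (0:ℝ) rb := ⟨hx0I.1.trans hy.1, hy.2⟩
    simp only [piRMt, interQt]
    rw [hy0T, hx0T, min_self]
    have hR0 : max (T - T) 0 = 0 := by simp
    rw [hR0]
    have hRmax : max (y0 - x0) 0 = y0 - x0 := max_eq_left (by linarith)
    rw [hRmax]
    have hLmax : max (y - x0) 0 = y - x0 := max_eq_left (by linarith [hy.1])
    rw [hLmax]
    rcases le_or_gt T (θ2 * S y) with hcase | hcase
    · rw [min_eq_left hcase]
      have h1 : max (θ2 * S y - T) 0 = θ2 * S y - T := max_eq_left (by linarith)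
      rw [h1]
      have hyy0 : y ≤ y0 := by
        by_contra h
        push_neg at h
        have := hSa hy0rb hyrb h
        nlinarith
      nlinarith [mul_nonneg (by linarith : (0:ℝ) ≤ θ2 * S y - T) hyrb.1]
    · rw [min_eq_right hcase.le]
      have h0 : max (θ2 * S y - θ2 * S y) 0 = 0 := by simp
      rw [h0]
      have hy0y : y0 ≤ y := by
        by_contra h
        push_neg at h
        have := hSa hyrb hy0rb h
        nlinarith
      have key := mul_le_mul_of_nonneg_left (claimB y hy0y hy.2) hθ2p.le
      nlinarith

/-- Multiplicity of asymmetric-information equilibrium strategies: two distinct target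
volumes `T₁ ≠ T₂` satisfying the minimal-type constrained-equilibrium condition yield
two distinct ex-post equilibria. -/
theorem asymmetric_equilibrium_multiplicity
    (rhat rb Tmax : ℝ) (D S mA sA : ℝ → ℝ)
    (hrhat : 0 < rhat) (hrb : rhat < rb) (hTmax : 0 < Tmax)
    (hDc : ContinuousOn D (Icc 0 rb)) (hDm : StrictMonoOn D (Icc 0 rb))
    (hD0 : D 0 = 0) (hDr : D rhat = Tmax)
    (hSc : ContinuousOn S (Icc 0 rb)) (hSa : StrictAntiOn S (Icc 0 rb))
    (hSb : S rb = 0) (hSr : S rhat = Tmax)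
    (U : Set ℝ) (hUo : IsOpen U) (hU : Icc (0:ℝ) rb ⊆ U)
    (hD2 : ContDiffOn ℝ 2 D U) (hS2 : ContDiffOn ℝ 2 S U)
    (hD' : ∀ x ∈ Icc (0:ℝ) rb, 0 < deriv D x)
    (hD'' : ∀ x ∈ Icc (0:ℝ) rb, deriv (deriv D) x < 0)
    (hS' : ∀ x ∈ Icc (0:ℝ) rb, deriv S x < 0)
    (hS'' : ∀ x ∈ Icc (0:ℝ) rb, deriv (deriv S) x < 0)
    (θl1 θu1 θl2 θu2 : ℝ)
    (hθ1 : 0 < θl1) (hθ1' : θl1 ≤ θu1) (hθ2 : 0 < θl2) (hθ2' : θl2 ≤ θu2)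
    (hmA : ∀ y ∈ Ioc (0:ℝ) rb, mA y ∈ Icc (0:ℝ) y ∧
      (∀ r ∈ Icc (0:ℝ) y, (y - r) * D r ≤ (y - mA y) * D (mA y)) ∧
      (∀ m ∈ Icc (0:ℝ) y,
        (∀ r ∈ Icc (0:ℝ) y, (y - r) * D r ≤ (y - m) * D m) → m = mA y))
    (hsA : ∀ x ∈ Ico (0:ℝ) rb, sA x ∈ Icc x rb ∧
      (∀ r ∈ Icc x rb, (r - x) * S r ≤ (sA x - x) * S (sA x)) ∧
      (∀ m ∈ Icc x rb,
        (∀ r ∈ Icc x rb, (r - x) * S r ≤ (m - x) * S m) → m = sA x))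
    (T1 T2 : ℝ) (hT12 : T1 ≠ T2)
    (hT1 : T1 ∈ Ioc (0:ℝ) (min (θl1 * Tmax) (θl2 * Tmax)))
    (hT2 : T2 ∈ Ioc (0:ℝ) (min (θl1 * Tmax) (θl2 * Tmax)))
    (σ11 σ21 σ12 σ22 : ℝ → ℝ)
    (hσ11 : ∀ θ1 ∈ Icc θl1 θu1, σ11 θ1 ∈ Icc (0:ℝ) rhat ∧ θ1 * D (σ11 θ1) = T1)
    (hσ21 : ∀ θ2 ∈ Icc θl2 θu2, σ21 θ2 ∈ Icc rhat rb ∧ θ2 * S (σ21 θ2) = T1)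
    (hσ12 : ∀ θ1 ∈ Icc θl1 θu1, σ12 θ1 ∈ Icc (0:ℝ) rhat ∧ θ1 * D (σ12 θ1) = T2)
    (hσ22 : ∀ θ2 ∈ Icc θl2 θu2, σ22 θ2 ∈ Icc rhat rb ∧ θ2 * S (σ22 θ2) = T2)
    (hmin11 : σ11 θl1 ≤ mA (σ21 θl2)) (hmin21 : sA (σ11 θl1) ≤ σ21 θl2)
    (hmin12 : σ12 θl1 ≤ mA (σ22 θl2)) (hmin22 : sA (σ12 θl1) ≤ σ22 θl2) :
    IsExPostEquilibrium D S rb θl1 θu1 θl2 θu2 σ11 σ21 ∧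
    IsExPostEquilibrium D S rb θl1 θu1 θl2 θu2 σ12 σ22 ∧
    (∀ θ1 ∈ Icc θl1 θu1, σ11 θ1 ≠ σ12 θ1) ∧
    (∀ θ2 ∈ Icc θl2 θu2, σ21 θ2 ≠ σ22 θ2) := by
  have hT1p : 0 < T1 := hT1.1
  have hT2p : 0 < T2 := hT2.1
  refine ⟨?_, ?_, ?_, ?_⟩
  · exact equilibrium_one rhat rb D S mA sA hrhat hrb hDm hSa U hUo hU hD2 hS2
      hD' hD'' hS' hS'' θl1 θu1 θl2 θu2 hθ1 hθ1' hθ2 hθ2' hmA hsA T1 hT1p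
      σ11 σ21 hσ11 hσ21 hmin11 hmin21
  · exact equilibrium_one rhat rb D S mA sA hrhat hrb hDm hSa U hUo hU hD2 hS2
      hD' hD'' hS' hS'' θl1 θu1 θl2 θu2 hθ1 hθ1' hθ2 hθ2' hmA hsA T2 hT2p
      σ12 σ22 hσ12 hσ22 hmin12 hmin22
  · intro θ1 hθm h
    obtain ⟨_, h1⟩ := hσ11 θ1 hθm
    obtain ⟨_, h2⟩ := hσ12 θ1 hθm
    rw [h] at h1
    exact hT12 (h1 ▸ h2 ▸ rfl)
  · intro θ2 hθm h
    obtain ⟨_, h1⟩ := hσ21 θ2 hθm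
    obtain ⟨_, h2⟩ := hσ22 θ2 hθm
    rw [h] at h1
    exact hT12 (h1 ▸ h2 ▸ rfl)
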